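/- Let σ have ‖σ'‖_∞ ≤ σ₁ and ‖σ''‖_∞ ≤ σ₂, and let F(x;θ) = (1/√m) ∑_{i=1}^m c_i σ(θ_iᵀ x) with |c_i| = 1. Suppose ‖θ_i - θ_i(0)‖₂ ≤ p/√m for all i and ‖x‖₂ ≤ c_Ω. Then |∑_{i=1}^m ∇_{θ_i} F(x;θ)ᵀ(θ_i - θ_i(0)) - ∑_{i=1}^m ∇_{θ_i} F(x;θ(0))ᵀ(θ_i - θ_i(0))| ≤ p² c_Ω² σ₂ / √m. -/

import Mathlib

open scoped RealInnerProductSpace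

lemma deriv_lipschitz_of_bound (σ : ℝ → ℝ) (σ₂ : ℝ)
    (hσ' : Differentiable ℝ (deriv σ))
    (hσ₂ : ∀ z : ℝ, |deriv (deriv σ) z| ≤ σ₂) (a b : ℝ) :
    |deriv σ a - deriv σ b| ≤ σ₂ * |a - b| := by
  have := Convex.norm_image_sub_le_of_norm_deriv_le
    (f := deriv σ) (s := Set.univ) (C := σ₂)
    (fun z _ => hσ' z)
    (fun z _ => by simpa [Real.norm_eq_abs] using hσ₂ z)
    convex_univ (Set.mem_univ b) (Set.mem_univ a)
  simpa [Real.norm_eq_abs] using this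

/-- Change of the tangent-space pairing when the gradient of the shallow network is
evaluated at `θ` versus `θ(0)`:
`|∑ᵢ ∇F(x;θ)ᵀ(θᵢ-θᵢ(0)) - ∑ᵢ ∇F(x;θ(0))ᵀ(θᵢ-θᵢ(0))| ≤ p² c_Ω² σ₂ / √m`. -/
theorem shallow_network_tangent_pairing_perturbation
    (d m : ℕ) (σ : ℝ → ℝ) (σ₁ σ₂ p cΩ : ℝ) (hp : 0 < p)
    (hσ : Differentiable ℝ σ) (hσ' : Differentiable ℝ (deriv σ))
    (hσ₁ : ∀ z : ℝ, |deriv σ z| ≤ σ₁)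
    (hσ₂ : ∀ z : ℝ, |deriv (deriv σ) z| ≤ σ₂)
    (c : Fin m → ℝ) (hc : ∀ i, |c i| = 1)
    (θ θ0 : Fin m → EuclideanSpace ℝ (Fin d))
    (hθ : ∀ i, ‖θ i - θ0 i‖ ≤ p / Real.sqrt m)
    (x : EuclideanSpace ℝ (Fin d)) (hx : ‖x‖ ≤ cΩ) :
    |∑ i, (c i / Real.sqrt m) * deriv σ ⟪θ i, x⟫ * ⟪x, θ i - θ0 i⟫
      - ∑ i, (c i / Real.sqrt m) * deriv σ ⟪θ0 i, x⟫ * ⟪x, θ i - θ0 i⟫|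
    ≤ p ^ 2 * cΩ ^ 2 * σ₂ / Real.sqrt m := by
  rcases Nat.eq_zero_or_pos m with hm | hm
  · subst hm
    simp
  have hcΩ : (0:ℝ) ≤ cΩ := le_trans (norm_nonneg x) hx
  have hσ₂0 : (0:ℝ) ≤ σ₂ := le_trans (abs_nonneg _) (hσ₂ 0)
  have hs : (0:ℝ) < Real.sqrt m := Real.sqrt_pos.2 (by exact_mod_cast hm)
  rw [← Finset.sum_sub_distrib]
  calc |∑ i, ((c i / Real.sqrt m) * deriv σ ⟪θ i, x⟫ * ⟪x, θ i - θ0 i⟫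
        - (c i / Real.sqrt m) * deriv σ ⟪θ0 i, x⟫ * ⟪x, θ i - θ0 i⟫)|
      ≤ ∑ i, |(c i / Real.sqrt m) * deriv σ ⟪θ i, x⟫ * ⟪x, θ i - θ0 i⟫
        - (c i / Real.sqrt m) * deriv σ ⟪θ0 i, x⟫ * ⟪x, θ i - θ0 i⟫| :=
        Finset.abs_sum_le_sum_abs _ _
    _ ≤ ∑ _i : Fin m, (1 / Real.sqrt m) * (σ₂ * ((p / Real.sqrt m) * cΩ)) * (cΩ * (p / Real.sqrt m)) := by
        apply Finset.sum_le_sum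
        intro i _
        have h1 : (c i / Real.sqrt m) * deriv σ ⟪θ i, x⟫ * ⟪x, θ i - θ0 i⟫
            - (c i / Real.sqrt m) * deriv σ ⟪θ0 i, x⟫ * ⟪x, θ i - θ0 i⟫
            = (c i / Real.sqrt m) * (deriv σ ⟪θ i, x⟫ - deriv σ ⟪θ0 i, x⟫) * ⟪x, θ i - θ0 i⟫ := by
          ring
        rw [h1, abs_mul, abs_mul, abs_div, hc i, abs_of_pos hs]
        have hlip : |deriv σ ⟪θ i, x⟫ - deriv σ ⟪θ0 i, x⟫|
            ≤ σ₂ * ((p / Real.sqrt m) * cΩ) := by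
          refine le_trans (deriv_lipschitz_of_bound σ σ₂ hσ' hσ₂ _ _) ?_
          gcongr
          have : ⟪θ i, x⟫ - ⟪θ0 i, x⟫ = ⟪θ i - θ0 i, x⟫ := (inner_sub_left _ _ _).symm
          rw [this]
          calc |⟪θ i - θ0 i, x⟫| ≤ ‖θ i - θ0 i‖ * ‖x‖ := abs_real_inner_le_norm _ _
            _ ≤ (p / Real.sqrt m) * cΩ := by
                apply mul_le_mul (hθ i) hx (norm_nonneg _)
                positivity
        have hin : |⟪x, θ i - θ0 i⟫| ≤ cΩ * (p / Real.sqrt m) := by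
          calc |⟪x, θ i - θ0 i⟫| ≤ ‖x‖ * ‖θ i - θ0 i‖ := abs_real_inner_le_norm _ _
            _ ≤ cΩ * (p / Real.sqrt m) := by
                apply mul_le_mul hx (hθ i) (norm_nonneg _) hcΩ
        gcongr <;> positivity
    _ = p ^ 2 * cΩ ^ 2 * σ₂ / Real.sqrt m := by
        rw [Finset.sum_const, Finset.card_univ, Fintype.card_fin]
        have h2 : Real.sqrt m * Real.sqrt m = (m:ℝ) := Real.mul_self_sqrt (Nat.cast_nonneg m)
        field_simp
        ring_nf
        set s := Real.sqrt m
        rw [← h2]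
        have hss : s * s⁻¹ = 1 := mul_inv_cancel₀ hs.ne'
        linear_combination σ₂ * p ^ 2 * cΩ ^ 2 * ((s * s⁻¹) ^ 2 + s * s⁻¹ + 1) * hss
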